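/- Let ρ ∈ (0,1/2), γ > 0, b = 2ρ/(γ(1-ρ)), μ, σ real with σ > 0 and ρ = 2μ/σ². Define V(x) = (1 − (γ/2)b) b^ρ x^(1−ρ) + (γ/2) b^(2ρ) x^(2−2ρ) for 0 < x < b, and g(x) = b^ρ x^(1−ρ) for 0 < x < b. Then for all x ∈ (0,b): (σ²x²/2)·V''(x) + μx·V'(x) = (γ/2)·σ²·x²·(g'(x))². -/

import Mathlib

theorem stmt_3 (ρ γ b μ σ : ℝ) (hρ0 : 0 < ρ) (hρ1 : ρ < 1/2) (hγ : 0 < γ)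
    (hb : b = 2 * ρ / (γ * (1 - ρ))) (hσ : 0 < σ) (hμ : ρ = 2 * μ / σ ^ 2)
    (V g : ℝ → ℝ)
    (hV : ∀ x : ℝ, 0 < x → x < b →
      V x = (1 - (γ / 2) * b) * b ^ ρ * x ^ (1 - ρ) + (γ / 2) * b ^ (2 * ρ) * x ^ (2 - 2 * ρ))
    (hg : ∀ x : ℝ, 0 < x → x < b → g x = b ^ ρ * x ^ (1 - ρ)) :
    ∀ x : ℝ, 0 < x → x < b →
      (σ ^ 2 * x ^ 2 / 2) * deriv (deriv V) x + μ * x * deriv V x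
        = (γ / 2) * σ ^ 2 * x ^ 2 * (deriv g x) ^ 2 := by
  intro x hx0 hxb
  have hb0 : 0 < b := hx0.trans hxb
  set c1 : ℝ := (1 - (γ / 2) * b) * b ^ ρ with hc1
  set c2 : ℝ := (γ / 2) * b ^ (2 * ρ) with hc2
  -- derivative of the explicit formula
  have hF : ∀ y : ℝ, 0 < y → HasDerivAt (fun y : ℝ => c1 * y ^ (1 - ρ) + c2 * y ^ (2 - 2 * ρ))
      (c1 * ((1 - ρ) * y ^ (-ρ)) + c2 * ((2 - 2 * ρ) * y ^ (1 - 2 * ρ))) y := by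
    intro y hy
    have h1 := (Real.hasDerivAt_rpow_const (x := y) (p := 1 - ρ) (Or.inl hy.ne')).const_mul c1
    have h2 := (Real.hasDerivAt_rpow_const (x := y) (p := 2 - 2 * ρ) (Or.inl hy.ne')).const_mul c2
    have := h1.add h2
    refine this.congr_deriv ?_; ring_nf
  have hF1 : ∀ y : ℝ, 0 < y → HasDerivAt
      (fun y : ℝ => c1 * ((1 - ρ) * y ^ (-ρ)) + c2 * ((2 - 2 * ρ) * y ^ (1 - 2 * ρ)))
      (c1 * ((1 - ρ) * (-ρ * y ^ (-ρ - 1))) + c2 * ((2 - 2 * ρ) * ((1 - 2 * ρ) * y ^ (-2 * ρ)))) y := by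
    intro y hy
    have h1 := ((Real.hasDerivAt_rpow_const (x := y) (p := -ρ) (Or.inl hy.ne')).const_mul
      (1 - ρ)).const_mul c1
    have h2 := ((Real.hasDerivAt_rpow_const (x := y) (p := 1 - 2 * ρ) (Or.inl hy.ne')).const_mul
      (2 - 2 * ρ)).const_mul c2
    have := h1.add h2
    refine this.congr_deriv ?_; ring_nf
  have hmem : Set.Ioo (0 : ℝ) b ∈ nhds x := Ioo_mem_nhds hx0 hxb
  have hVF : V =ᶠ[nhds x] (fun y : ℝ => c1 * y ^ (1 - ρ) + c2 * y ^ (2 - 2 * ρ)) :=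
    Filter.eventually_of_mem hmem (fun y hy => hV y hy.1 hy.2)
  -- first derivative of V on a neighborhood
  have hderivV : ∀ y : ℝ, 0 < y → y < b →
      deriv V y = c1 * ((1 - ρ) * y ^ (-ρ)) + c2 * ((2 - 2 * ρ) * y ^ (1 - 2 * ρ)) := by
    intro y hy0 hyb
    have hVFy : V =ᶠ[nhds y] (fun z : ℝ => c1 * z ^ (1 - ρ) + c2 * z ^ (2 - 2 * ρ)) :=
      Filter.eventually_of_mem (Ioo_mem_nhds hy0 hyb) (fun z hz => hV z hz.1 hz.2)
    exact ((hF y hy0).congr_of_eventuallyEq hVFy).deriv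
  have hdV : HasDerivAt (deriv V)
      (c1 * ((1 - ρ) * (-ρ * x ^ (-ρ - 1))) + c2 * ((2 - 2 * ρ) * ((1 - 2 * ρ) * x ^ (-2 * ρ)))) x := by
    have heq : deriv V =ᶠ[nhds x]
        (fun y : ℝ => c1 * ((1 - ρ) * y ^ (-ρ)) + c2 * ((2 - 2 * ρ) * y ^ (1 - 2 * ρ))) :=
      Filter.eventually_of_mem hmem (fun y hy => hderivV y hy.1 hy.2)
    exact (hF1 x hx0).congr_of_eventuallyEq heq
  have hd2 : deriv (deriv V) x
      = c1 * ((1 - ρ) * (-ρ * x ^ (-ρ - 1))) + c2 * ((2 - 2 * ρ) * ((1 - 2 * ρ) * x ^ (-2 * ρ))) :=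
    hdV.deriv
  have hd1 : deriv V x = c1 * ((1 - ρ) * x ^ (-ρ)) + c2 * ((2 - 2 * ρ) * x ^ (1 - 2 * ρ)) :=
    hderivV x hx0 hxb
  -- derivative of g
  have hdg : deriv g x = b ^ ρ * ((1 - ρ) * x ^ (-ρ)) := by
    have hG : HasDerivAt (fun y : ℝ => b ^ ρ * y ^ (1 - ρ)) (b ^ ρ * ((1 - ρ) * x ^ (-ρ))) x := by
      have h1 := (Real.hasDerivAt_rpow_const (x := x) (p := 1 - ρ) (Or.inl hx0.ne')).const_mul
        (b ^ ρ)
      refine h1.congr_deriv ?_; ring_nf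
    have hgF : g =ᶠ[nhds x] (fun y : ℝ => b ^ ρ * y ^ (1 - ρ)) :=
      Filter.eventually_of_mem hmem (fun y hy => hg y hy.1 hy.2)
    exact (hG.congr_of_eventuallyEq hgF).deriv
  rw [hd1, hd2, hdg]
  have hμ' : μ = ρ * σ ^ 2 / 2 := by
    have hσ2 : (σ : ℝ) ^ 2 ≠ 0 := by positivity
    field_simp at hμ
    linarith
  have e1 : x ^ (-ρ - 1) = x ^ (-ρ) / x := by
    rw [show -ρ - 1 = -ρ + (-1) by ring, Real.rpow_add hx0, Real.rpow_neg_one, div_eq_mul_inv]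
  have e3 : x ^ (-2 * ρ) = x ^ (-ρ) * x ^ (-ρ) := by
    rw [← Real.rpow_add hx0]; ring_nf
  have e4 : x ^ (1 - 2 * ρ) = x * (x ^ (-ρ) * x ^ (-ρ)) := by
    rw [show 1 - 2 * ρ = 1 + (-ρ + -ρ) by ring, Real.rpow_add hx0, Real.rpow_add hx0,
      Real.rpow_one]
  have e6 : b ^ (2 * ρ) = b ^ ρ * b ^ ρ := by
    rw [← Real.rpow_add hb0]; ring_nf
  rw [e1, e3, e4, hμ', hc1, hc2, e6]
  field_simp
  ring
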